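/- Let {S_i}_{i∈I} be a family of connected sublocales of a frame L whose join exists as a sublocale. If there exists i₀ ∈ I such that closure(S_i) meets S_{i₀} for every i (or dually S_i meets closure(S_{i₀}) for every i), then ⋁_{i} S_i is connected. -/

import Mathlib

open Order Set

variable {L : Type*} [Order.Frame L]

/-- A sublocale of a frame: closed under arbitrary meets and under Heyting implication
from arbitrary elements. -/
def IsSublocale (S : Set L) : Prop :=
  (∀ M ⊆ S, sInf M ∈ S) ∧ ∀ x : L, ∀ s ∈ S, x ⇨ s ∈ S

/-- The open sublocale associated to `u`. -/
def oSub (u : L) : Set L := {x | u ⇨ x = x}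

/-- The closed sublocale associated to `u`. -/
def cSub (u : L) : Set L := Set.Ici u

/-- Binary join of sublocales. -/
def vee (A B : Set L) : Set L := {x | ∃ M ⊆ A ∪ B, x = sInf M}

/-- Join of a family of sublocales. -/
def iJoin {ι : Type*} (S : ι → Set L) : Set L := {x | ∃ M ⊆ ⋃ i, S i, x = sInf M}

/-- Two sublocales meet if their intersection is not the void sublocale `{⊤}`. -/
def Meets (S T : Set L) : Prop := S ∩ T ≠ ({⊤} : Set L)

/-- The closure of a sublocale. -/
def clo (S : Set L) : Set L := Set.Ici (sInf S)

/-- The index of the interior: the largest `u` with `oSub u ⊆ S`. -/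
def intIdx (S : Set L) : L := sSup {u | oSub u ⊆ S}

/-- The interior of a sublocale: the largest open sublocale contained in it. -/
def intr (S : Set L) : Set L := oSub (intIdx S)

/-- The boundary of a sublocale: closure minus interior
(computed as `clo S ∩ cSub (intIdx S)`, since `cSub (intIdx S)` is the complement of
the interior). -/
def bd (S : Set L) : Set L := clo S ∩ cSub (intIdx S)

/-- The supplement of a sublocale. -/
def suppl (S : Set L) : Set L := ⋂₀ {T | IsSublocale T ∧ vee T S = Set.univ}

/-- A sublocale is complemented if it is disjoint from its supplement. -/
def ComplementedSub (S : Set L) : Prop := S ∩ suppl S = ({⊤} : Set L)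

/-- A sublocale is connected if it admits no separation by two closed sublocales. -/
def SubConnected (S : Set L) : Prop :=
  ∀ a b : L, S ⊆ vee (cSub a) (cSub b) → S ∩ cSub a ∩ cSub b = ({⊤} : Set L) →
    S ∩ cSub a = ({⊤} : Set L) ∨ S ∩ cSub b = ({⊤} : Set L)

/-- Separated sublocales. -/
def SepSub (P Q : Set L) : Prop :=
  clo P ∩ Q = ({⊤} : Set L) ∧ P ∩ clo Q = ({⊤} : Set L)

/-- A connected element of a frame. -/
def ConnElem (v : L) : Prop := ∀ b c : L, v = b ⊔ c → b ⊓ c = ⊥ → b = ⊥ ∨ c = ⊥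

/-- A locally connected frame: every element is a join of connected elements. -/
def LocConn (L : Type*) [Order.Frame L] : Prop :=
  ∀ x : L, ∃ F : Set L, (∀ v ∈ F, ConnElem v) ∧ x = sSup F

/-- A strongly locally connected frame. -/
def StrLocConn (L : Type*) [Order.Frame L] : Prop :=
  ∀ u : L, ∀ x ∈ oSub u, ∃ v : L, SubConnected (oSub v) ∧ oSub v ⊆ oSub u ∧ x ∈ oSub v

/-- A component of a sublocale `T`: a nonvoid connected sublocale, maximal among
connected sublocales of `T`. -/
def IsComponent (D T : Set L) : Prop :=
  IsSublocale D ∧ D ⊆ T ∧ D ≠ ({⊤} : Set L) ∧ SubConnected D ∧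
    ∀ S : Set L, IsSublocale S → S ⊆ T → SubConnected S → Meets S D → S ⊆ D

/-- Normally separated sublocales. -/
def NormSep (S T : Set L) : Prop :=
  ∃ u v : L, oSub u ∩ oSub v = ({⊤} : Set L) ∧ S ⊆ oSub u ∧ T ⊆ oSub v

/-- Normally connected sublocale. -/
def NormConn (C : Set L) : Prop :=
  ∀ S T : Set L, IsSublocale S → IsSublocale T → vee S T = C → NormSep S T →
    S = ({⊤} : Set L) ∨ T = ({⊤} : Set L)

/-- A simple sublocale: complemented with both itself and its supplement connected. -/
def SimpleSub (S : Set L) : Prop :=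
  IsSublocale S ∧ ComplementedSub S ∧ SubConnected S ∧ SubConnected (suppl S)


lemma top_mem_of_sublocale {S : Set L} (hS : IsSublocale S) : (⊤ : L) ∈ S := by
  have := hS.1 ∅ (Set.empty_subset _)
  simpa using this

lemma subset_iJoin' {ι : Type*} (S : ι → Set L) (i : ι) : S i ⊆ iJoin S := by
  intro x hx
  exact ⟨{x}, by simpa using Set.mem_iUnion.mpr ⟨i, hx⟩, sInf_singleton.symm⟩

lemma vee_cSub_subset' (a b : L) : vee (cSub a) (cSub b) ⊆ cSub (a ⊓ b) := by
  rintro x ⟨M, hM, rfl⟩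
  refine le_sInf fun m hm => ?_
  rcases hM hm with h | h
  · exact inf_le_left.trans h
  · exact inf_le_right.trans h

lemma iJoin_subset_cSub' {ι : Type*} (S : ι → Set L) (b : L) (h : ∀ i, S i ⊆ cSub b) :
    iJoin S ⊆ cSub b := by
  rintro x ⟨M, hM, rfl⟩
  refine le_sInf fun m hm => ?_
  obtain ⟨i, hmi⟩ := Set.mem_iUnion.mp (hM hm)
  exact h i hmi

lemma key_sub {S : Set L} (hS : IsSublocale S) {a b : L} (hsub : S ⊆ cSub (a ⊓ b))
    (ha : S ∩ cSub a = ({⊤} : Set L)) : S ⊆ cSub b := by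
  intro x hx
  have ht : b ⇨ x ∈ S := hS.2 b x hx
  have haleq : a ≤ b ⇨ x := le_himp_iff.mpr (hsub hx)
  have hmem : b ⇨ x ∈ S ∩ cSub a := ⟨ht, haleq⟩
  rw [ha] at hmem
  have htop : (⊤ : L) ≤ b ⇨ x := (Set.mem_singleton_iff.mp hmem).ge
  have : (⊤ : L) ⊓ b ≤ x := le_himp_iff.mp htop
  exact (by simpa using this : b ≤ x)

lemma eq_singleton_top {X : Set L} (h1 : X ⊆ ({⊤} : Set L)) (h2 : (⊤ : L) ∈ X) :
    X = ({⊤} : Set L) := Set.Subset.antisymm h1 (Set.singleton_subset_iff.mpr h2)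

theorem stmt12 {ι : Type*} (S : ι → Set L) (hS : ∀ i, IsSublocale (S i))
    (hconn : ∀ i, SubConnected (S i)) (hJ : IsSublocale (iJoin S))
    (i₀ : ι)
    (h : (∀ i, Meets (clo (S i)) (S i₀)) ∨ (∀ i, Meets (S i) (clo (S i₀)))) :
    SubConnected (iJoin S) := by
  intro a b hsubJ hsep
  -- every S i lies in the "closed" separation
  have hSsub : ∀ i, S i ⊆ cSub (a ⊓ b) := fun i =>
    ((subset_iJoin' S i).trans hsubJ).trans (vee_cSub_subset' a b)
  have hSsep : ∀ i, S i ∩ cSub a ∩ cSub b = ({⊤} : Set L) := by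
    intro i
    refine eq_singleton_top ?_ ⟨⟨top_mem_of_sublocale (hS i), le_top⟩, le_top⟩
    intro x hx
    rw [← hsep]
    exact ⟨⟨subset_iJoin' S i hx.1.1, hx.1.2⟩, hx.2⟩
  -- dichotomy for each i
  have hdichot : ∀ i, S i ⊆ cSub b ∨ S i ⊆ cSub a := by
    intro i
    rcases hconn i a b ((subset_iJoin' S i).trans hsubJ) (hSsep i) with hc | hc
    · exact Or.inl (key_sub (hS i) (hSsub i) hc)
    · refine Or.inr (key_sub (hS i) ?_ hc)
      rw [inf_comm]; exact hSsub i
  -- a generic triviality lemma: an a-side set meeting a b-side set inside the join is void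
  have htriv : ∀ X Y : Set L, X ⊆ cSub a → Y ⊆ cSub b → (X ⊆ iJoin S ∨ Y ⊆ iJoin S) →
      (⊤ : L) ∈ X → (⊤ : L) ∈ Y → X ∩ Y = ({⊤} : Set L) := by
    intro X Y hXa hYb hJ' hXt hYt
    refine eq_singleton_top ?_ ⟨hXt, hYt⟩
    intro x hx
    rw [← hsep]
    rcases hJ' with hJ' | hJ'
    · exact ⟨⟨hJ' hx.1, hXa hx.1⟩, hYb hx.2⟩
    · exact ⟨⟨hJ' hx.2, hXa hx.1⟩, hYb hx.2⟩
  have htopclo : ∀ T : Set L, (⊤ : L) ∈ clo T := fun T => le_top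
  rcases h with hm | hm
  · -- clo (S i) meets S i₀ for all i
    rcases hdichot i₀ with h0 | h0
    · -- S i₀ ⊆ cSub b ; show all S i ⊆ cSub b
      refine Or.inl (eq_singleton_top ?_ ⟨top_mem_of_sublocale hJ, le_top⟩)
      have hall : ∀ i, S i ⊆ cSub b := by
        intro i
        rcases hdichot i with hi | hi
        · exact hi
        · exfalso
          refine hm i (htriv (clo (S i)) (S i₀) ?_ h0 (Or.inr (subset_iJoin' S i₀))
            (htopclo _) (top_mem_of_sublocale (hS i₀)))
          intro x hx
          exact le_trans (le_sInf fun s hs => hi hs) hx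
      intro x hx
      rw [← hsep]
      exact ⟨⟨hx.1, hx.2⟩, iJoin_subset_cSub' S b hall hx.1⟩
    · -- S i₀ ⊆ cSub a ; show all S i ⊆ cSub a
      refine Or.inr (eq_singleton_top ?_ ⟨top_mem_of_sublocale hJ, le_top⟩)
      have hall : ∀ i, S i ⊆ cSub a := by
        intro i
        rcases hdichot i with hi | hi
        · exfalso
          refine hm i ?_
          rw [Set.inter_comm]
          refine htriv (S i₀) (clo (S i)) h0 ?_ (Or.inl (subset_iJoin' S i₀))
            (top_mem_of_sublocale (hS i₀)) (htopclo _)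
          intro x hx
          exact le_trans (le_sInf fun s hs => hi hs) hx
        · exact hi
      intro x hx
      rw [← hsep]
      exact ⟨⟨hx.1, iJoin_subset_cSub' S a hall hx.1⟩, hx.2⟩
  · -- S i meets clo (S i₀) for all i
    rcases hdichot i₀ with h0 | h0
    · refine Or.inl (eq_singleton_top ?_ ⟨top_mem_of_sublocale hJ, le_top⟩)
      have hall : ∀ i, S i ⊆ cSub b := by
        intro i
        rcases hdichot i with hi | hi
        · exact hi
        · exfalso
          refine hm i (htriv (S i) (clo (S i₀)) hi ?_ (Or.inl (subset_iJoin' S i))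
            (top_mem_of_sublocale (hS i)) (htopclo _))
          intro x hx
          exact le_trans (le_sInf fun s hs => h0 hs) hx
      intro x hx
      rw [← hsep]
      exact ⟨⟨hx.1, hx.2⟩, iJoin_subset_cSub' S b hall hx.1⟩
    · refine Or.inr (eq_singleton_top ?_ ⟨top_mem_of_sublocale hJ, le_top⟩)
      have hall : ∀ i, S i ⊆ cSub a := by
        intro i
        rcases hdichot i with hi | hi
        · exfalso
          refine hm i ?_
          rw [Set.inter_comm]
          refine htriv (clo (S i₀)) (S i) ?_ hi (Or.inr (subset_iJoin' S i))
            (htopclo _) (top_mem_of_sublocale (hS i))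
          intro x hx
          exact le_trans (le_sInf fun s hs => h0 hs) hx
        · exact hi
      intro x hx
      rw [← hsep]
      exact ⟨⟨hx.1, iJoin_subset_cSub' S a hall hx.1⟩, hx.2⟩
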